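/- arXiv:0801.3780 — 2 statements merged into one kernel-verified Lean document; each statement's English description precedes it below -/
import Mathlib

section
/- The following three conditions are equivalent: (a) Condition (C), i.e. P(∪_{n≥1} [X^{(n)} ∈ S°]) > 0; (b) P[T < +∞] = 1; (c) P(∪_{n≥1} [X^{(n)} ∈ S°]) = 1. -/
open MeasureTheory ProbabilityTheory Filter Topology Matrix Finset

noncomputable section

namespace StablePaper

/-- The set of `q × q` matrices. -/
abbrev Mat (q : ℕ) := Matrix (Fin q) (Fin q) ℝ

instance {q : ℕ} : MeasurableSpace (Mat q) := MeasurableSpace.pi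

/-- Membership in the semigroup `S`: nonnegative entries, every row and every
column contains a strictly positive entry. -/
def memS {q : ℕ} (g : Mat q) : Prop :=
  (∀ i j, 0 ≤ g i j) ∧ (∀ i, ∃ j, 0 < g i j) ∧ (∀ j, ∃ i, 0 < g i j)

/-- Membership in `S°`: all entries strictly positive. -/
def memS0 {q : ℕ} (g : Mat q) : Prop := ∀ i j, 0 < g i j

/-- The norm `‖x‖ = ∑ i, |x i|` on `ℝ^q`. -/
def nrm {q : ℕ} (x : Fin q → ℝ) : ℝ := ∑ i, |x i|

/-- The cone `C̄` of vectors with nonnegative coordinates. -/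
def inCbar {q : ℕ} (x : Fin q → ℝ) : Prop := ∀ i, 0 ≤ x i

/-- `B̄`: unit vectors of `C̄`. -/
def inBbar {q : ℕ} (x : Fin q → ℝ) : Prop := inCbar x ∧ nrm x = 1

/-- `B`: unit vectors with strictly positive coordinates. -/
def inB {q : ℕ} (x : Fin q → ℝ) : Prop := (∀ i, 0 < x i) ∧ nrm x = 1

/-- The projective action `g · x = gx / ‖gx‖`. -/
def proj {q : ℕ} (g : Mat q) (x : Fin q → ℝ) : Fin q → ℝ :=
  fun i => g.mulVec x i / nrm (g.mulVec x)

/-- `m(x,y) = min { x i / y i : y i > 0 }`. -/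
def mfun {q : ℕ} (x y : Fin q → ℝ) : ℝ :=
  sInf ((fun i => x i / y i) '' {i | 0 < y i})

/-- The distance `d(x,y) = φ(m(x,y) m(y,x))` with `φ(s) = (1-s)/(1+s)`. -/
def dB {q : ℕ} (x y : Fin q → ℝ) : ℝ :=
  (1 - mfun x y * mfun y x) / (1 + mfun x y * mfun y x)

/-- The cocycle `ξ(g,x) = ln ‖gx‖`. -/
def xi {q : ℕ} (g : Mat q) (x : Fin q → ℝ) : ℝ := Real.log (nrm (g.mulVec x))

/-- `X^{(n)} = X_n ⋯ X_1` (with `X^{(0)}` the identity matrix). -/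
def Xprod {q : ℕ} {Ω : Type} (X : ℕ → Ω → Mat q) : ℕ → Ω → Mat q
  | 0 => fun _ => 1
  | n + 1 => fun ω => X (n + 1) ω * Xprod X n ω

/-- `Y^{(n)} = Y_1 ⋯ Y_n` where `Y_k = X_kᵀ`. -/
def Yprod {q : ℕ} {Ω : Type} (X : ℕ → Ω → Mat q) : ℕ → Ω → Mat q
  | 0 => fun _ => 1
  | n + 1 => fun ω => Yprod X n ω * (X (n + 1) ω)ᵀ

/-- `Ỹ^{(n)} = Y_n ⋯ Y_1` where `Y_k = X_kᵀ`. -/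
def Ytil {q : ℕ} {Ω : Type} (X : ℕ → Ω → Mat q) : ℕ → Ω → Mat q
  | 0 => fun _ => 1
  | n + 1 => fun ω => (X (n + 1) ω)ᵀ * Ytil X n ω

/-- The hitting time `T = inf { n ≥ 1 : X^{(n)} ∈ S° }` (equal to `⊤` if no such `n`). -/
def hitT {q : ℕ} {Ω : Type} (X : ℕ → Ω → Mat q) (ω : Ω) : ℕ∞ :=
  ⨅ (n : ℕ) (_ : 1 ≤ n ∧ memS0 (Xprod X n ω)), (n : ℕ∞)

/-- The indicator `1_{[T ≤ n]}`. -/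
def indT {q : ℕ} {Ω : Type} (X : ℕ → Ω → Mat q) (n : ℕ) (ω : Ω) : ℝ :=
  if hitT X ω ≤ (n : ℕ∞) then 1 else 0

/-- Condition (C). -/
def CondC {q : ℕ} {Ω : Type} [MeasurableSpace Ω] (P : Measure Ω)
    (X : ℕ → Ω → Mat q) : Prop :=
  0 < P {ω | ∃ n, 1 ≤ n ∧ memS0 (Xprod X n ω)}

/-- `(X_n)` is an i.i.d. sequence. -/
def IID {q : ℕ} {Ω : Type} [MeasurableSpace Ω] (P : Measure Ω)
    (X : ℕ → Ω → Mat q) : Prop :=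
  (∀ n, Measurable (X n)) ∧
  iIndepFun X P ∧
  ∀ n, Measure.map (X n) P = Measure.map (X 1) P

/-- `N₁`-functional of a matrix: the sum of all entries. -/
def N1fun {q : ℕ} (g : Mat q) : ℝ := ∑ i, ∑ j, g i j

/-- `V₁`-functional of a matrix: the minimal row sum. -/
def V1fun {q : ℕ} (g : Mat q) : ℝ := sInf {r : ℝ | ∃ i, r = ∑ j, g i j}

/-- The spectral radius of a real matrix (via its complex spectrum). -/
def specRad {q : ℕ} (g : Mat q) : ℝ :=
  (spectralRadius ℂ (g.map (algebraMap ℝ ℂ))).toReal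

/-- A slowly varying function `L : (0,∞) → (0,∞)`. -/
def SlowlyVarying (L : ℝ → ℝ) : Prop :=
  (∀ u : ℝ, 0 < u → 0 < L u) ∧
  ∀ l : ℝ, 0 < l → Tendsto (fun u => L (l * u) / L u) atTop (𝓝 1)

/-- Convolution of two measures on `ℝ`. -/
def mconv (ρ₁ ρ₂ : Measure ℝ) : Measure ℝ :=
  Measure.map (fun p : ℝ × ℝ => p.1 + p.2) (ρ₁.prod ρ₂)

/-- `n`-fold convolution power. -/
def convPow (ρ : Measure ℝ) : ℕ → Measure ℝ
  | 0 => Measure.dirac 0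
  | n + 1 => mconv (convPow ρ n) ρ

/-- A stable law of index `α`: a non-Dirac probability measure `ρ` such that for
every `n ≥ 1` there is `d_n ∈ ℝ` with `ρ^{*n}` equal to the image of `ρ` under
`x ↦ n^{1/α} x + d_n`. -/
def IsStableLaw (α : ℝ) (ρ : Measure ℝ) : Prop :=
  IsProbabilityMeasure ρ ∧ (¬ ∃ c : ℝ, ρ = Measure.dirac c) ∧
  ∀ n : ℕ, 1 ≤ n → ∃ d : ℝ,
    convPow ρ n = Measure.map (fun x => (n : ℝ) ^ (1 / α) * x + d) ρ

/-- Convergence in distribution of real random variables to the law `ρ`. -/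
def ConvInDistrib {Ω : Type} [MeasurableSpace Ω] (P : Measure Ω)
    (Z : ℕ → Ω → ℝ) (ρ : Measure ℝ) : Prop :=
  ∀ f : BoundedContinuousFunction ℝ ℝ,
    Tendsto (fun n => ∫ ω, f (Z n ω) ∂P) atTop (𝓝 (∫ x, f x ∂ρ))

/-- `μ^{(n)}`: the law of `Y^{(n)} = Y_1 ⋯ Y_n`. -/
def muN {q : ℕ} {Ω : Type} [MeasurableSpace Ω] (P : Measure Ω)
    (X : ℕ → Ω → Mat q) (n : ℕ) : Measure (Mat q) :=
  Measure.map (fun ω => Yprod X n ω) P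

/-- The contraction coefficient `c(g)`. -/
def cg {q : ℕ} (g : Mat q) : ℝ :=
  sSup {r : ℝ | ∃ x y, inBbar x ∧ inBbar y ∧ x ≠ y ∧
    r = dB (proj g x) (proj g y) / dB x y}

/-- The coefficient `c(μ^{(n)})`. -/
def cmu {q : ℕ} {Ω : Type} [MeasurableSpace Ω] (P : Measure Ω)
    (X : ℕ → Ω → Mat q) (n : ℕ) : ℝ :=
  sSup {r : ℝ | ∃ y y', inBbar y ∧ inBbar y' ∧ y ≠ y' ∧
    r = ∫ g, dB (proj g y) (proj g y') / dB y y' ∂(muN P X n)}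

/-- `κ(μ) = inf_{n ≥ 1} c(μ^{(n)})^{1/n}`. -/
def kappa {q : ℕ} {Ω : Type} [MeasurableSpace Ω] (P : Measure Ω)
    (X : ℕ → Ω → Mat q) : ℝ :=
  sInf {r : ℝ | ∃ n, 1 ≤ n ∧ r = cmu P X n ^ ((n : ℝ)⁻¹)}

/-- `ν` is `μ`-invariant. -/
def MuInvariant {q : ℕ} (μ : Measure (Mat q)) (ν : Measure (Fin q → ℝ)) : Prop :=
  ∀ f : BoundedContinuousFunction (Fin q → ℝ) ℝ,
    ∫ x, (∫ g, f (proj g x) ∂μ) ∂ν = ∫ x, f x ∂ν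

/-- The Fourier kernels `P_t` (so `P = P_0`). -/
def Ptop {q : ℕ} (μ : Measure (Mat q)) (t : ℝ) (f : (Fin q → ℝ) → ℂ)
    (x : Fin q → ℝ) : ℂ :=
  ∫ g, Complex.exp (Complex.I * (t : ℂ) * (xi g x : ℂ)) * f (proj g x) ∂μ

/-- The sup norm `‖f‖_u` over `B̄`. -/
def supnorm {q : ℕ} (f : (Fin q → ℝ) → ℂ) : ℝ :=
  sSup {r : ℝ | ∃ x, inBbar x ∧ r = ‖f x‖}

/-- The Lipschitz seminorm `m(f)` with respect to the distance `d` on `B̄`. -/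
def mlip {q : ℕ} (f : (Fin q → ℝ) → ℂ) : ℝ :=
  sSup {r : ℝ | ∃ x y, inBbar x ∧ inBbar y ∧ x ≠ y ∧
    r = ‖f x - f y‖ / dB x y}

/-- Membership in the space `L` of `d`-Lipschitz functions on `B̄`. -/
def memL {q : ℕ} (f : (Fin q → ℝ) → ℂ) : Prop :=
  ∃ M : ℝ, ∀ x y, inBbar x → inBbar y → ‖f x - f y‖ ≤ M * dB x y

/-- The norm `‖f‖_L = ‖f‖_u + m(f)`. -/
def normL {q : ℕ} (f : (Fin q → ℝ) → ℂ) : ℝ := supnorm f + mlip f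

/-- `‖g‖ = sup { ‖gx‖ : x ∈ B̄ }`. -/
def opg {q : ℕ} (g : Mat q) : ℝ :=
  sSup {r : ℝ | ∃ x, inBbar x ∧ r = nrm (g.mulVec x)}

/-- `v(g) = inf { ‖gx‖ : x ∈ B̄ }`. -/
def vg {q : ℕ} (g : Mat q) : ℝ :=
  sInf {r : ℝ | ∃ x, inBbar x ∧ r = nrm (g.mulVec x)}

/-- `ℓ(g) = |ln ‖g‖| + |ln v(g)|`. -/
def ellg {q : ℕ} (g : Mat q) : ℝ := |Real.log (opg g)| + |Real.log (vg g)|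

/-- `ε(t) = ∫ min(|t| ℓ(g), 2) dμ(g)`. -/
def epsT {q : ℕ} (μ : Measure (Mat q)) (t : ℝ) : ℝ :=
  ∫ g, min (|t| * ellg g) 2 ∂μ

/-- The operator norm of `P_t - P` on `L`. -/
def opNormDiff {q : ℕ} (μ : Measure (Mat q)) (t : ℝ) : ℝ :=
  sSup {r : ℝ | ∃ f : (Fin q → ℝ) → ℂ, memL f ∧ normL f ≤ 1 ∧
    r = normL (fun x => Ptop μ t f x - Ptop μ 0 f x)}

/-! ### Auxiliary material for the proof of `statement1` -/

section Aux

variable {q : ℕ}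

lemma memS_one : memS (1 : Mat q) := by
  refine ⟨fun i j => ?_, fun i => ⟨i, ?_⟩, fun j => ⟨j, ?_⟩⟩
  · rw [Matrix.one_apply]; split_ifs <;> norm_num
  · simp [Matrix.one_apply_eq]
  · simp [Matrix.one_apply_eq]

lemma memS_mul {a b : Mat q} (ha : memS a) (hb : memS b) : memS (a * b) := by
  refine ⟨fun i j => ?_, fun i => ?_, fun j => ?_⟩
  · rw [Matrix.mul_apply]
    exact Finset.sum_nonneg fun k _ => mul_nonneg (ha.1 i k) (hb.1 k j)
  · obtain ⟨k, hk⟩ := ha.2.1 i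
    obtain ⟨j, hj⟩ := hb.2.1 k
    refine ⟨j, ?_⟩
    rw [Matrix.mul_apply]
    exact Finset.sum_pos' (fun l _ => mul_nonneg (ha.1 i l) (hb.1 l j))
      ⟨k, Finset.mem_univ k, mul_pos hk hj⟩
  · obtain ⟨k, hk⟩ := hb.2.2 j
    obtain ⟨i, hi⟩ := ha.2.2 k
    refine ⟨i, ?_⟩
    rw [Matrix.mul_apply]
    exact Finset.sum_pos' (fun l _ => mul_nonneg (ha.1 i l) (hb.1 l j))
      ⟨k, Finset.mem_univ k, mul_pos hi hk⟩

lemma memS0_mul_memS {a b : Mat q} (ha : memS0 a) (hb : memS b) : memS0 (a * b) := by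
  intro i j
  obtain ⟨k, hk⟩ := hb.2.2 j
  rw [Matrix.mul_apply]
  exact Finset.sum_pos' (fun l _ => mul_nonneg (ha i l).le (hb.1 l j))
    ⟨k, Finset.mem_univ k, mul_pos (ha i k) hk⟩

/-- A pure product of matrices `Y_n ⋯ Y_1`. -/
def mprod (Y : ℕ → Mat q) : ℕ → Mat q
  | 0 => 1
  | n + 1 => Y (n + 1) * mprod Y n

lemma mprod_congr {Y Y' : ℕ → Mat q} {n : ℕ}
    (h : ∀ k, 1 ≤ k → k ≤ n → Y k = Y' k) : mprod Y n = mprod Y' n := by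
  induction n with
  | zero => rfl
  | succ n ih =>
    simp only [mprod]
    rw [h (n + 1) (by omega) le_rfl, ih fun k hk hk' => h k hk (by omega)]

lemma Xprod_eq_mprod {Ω : Type} (X : ℕ → Ω → Mat q) (n : ℕ) (ω : Ω) :
    Xprod X n ω = mprod (fun k => X k ω) n := by
  induction n with
  | zero => rfl
  | succ n ih => simp only [Xprod, mprod, ih]

lemma Xprod_add {Ω : Type} (X : ℕ → Ω → Mat q) (a m : ℕ) (ω : Ω) :
    Xprod X (a + m) ω = mprod (fun j => X (j + a) ω) m * Xprod X a ω := by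
  induction m with
  | zero => simp [mprod]
  | succ m ih =>
    have h1 : a + (m + 1) = (a + m) + 1 := by omega
    rw [h1]
    show X ((a + m) + 1) ω * Xprod X (a + m) ω = _
    rw [ih]
    have h2 : (a + m) + 1 = (m + 1) + a := by omega
    rw [h2]
    simp only [mprod, mul_assoc]

lemma memS_Xprod {Ω : Type} {X : ℕ → Ω → Mat q}
    (hS : ∀ n, 1 ≤ n → ∀ ω, memS (X n ω)) (n : ℕ) (ω : Ω) :
    memS (Xprod X n ω) := by
  induction n with
  | zero => exact memS_one
  | succ n ih => exact memS_mul (hS (n + 1) (by omega) ω) ih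

lemma measurable_matmul : Measurable fun p : Mat q × Mat q => p.1 * p.2 := by
  apply measurable_pi_lambda
  intro i
  apply measurable_pi_lambda
  intro j
  simp only [Matrix.mul_apply]
  apply Finset.measurable_sum
  intro k _
  have h1 : Measurable fun p : Mat q × Mat q => p.1 i k :=
    (measurable_pi_apply k).comp ((measurable_pi_apply i).comp measurable_fst)
  have h2 : Measurable fun p : Mat q × Mat q => p.2 k j :=
    (measurable_pi_apply j).comp ((measurable_pi_apply k).comp measurable_snd)
  exact h1.mul h2

lemma measurable_mprod (n : ℕ) : Measurable fun Y : ℕ → Mat q => mprod Y n := by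
  induction n with
  | zero => exact measurable_const
  | succ n ih =>
    have : (fun Y : ℕ → Mat q => mprod Y (n + 1)) =
        (fun p : Mat q × Mat q => p.1 * p.2) ∘ fun Y => (Y (n + 1), mprod Y n) := rfl
    rw [this]
    exact measurable_matmul.comp ((measurable_pi_apply (n + 1)).prodMk ih)

lemma measurableSet_S0 : MeasurableSet {g : Mat q | memS0 g} := by
  have : {g : Mat q | memS0 g} = ⋂ i, ⋂ j, {g : Mat q | 0 < g i j} := by
    ext g; simp [memS0, Set.mem_iInter]
  rw [this]
  refine MeasurableSet.iInter fun i => MeasurableSet.iInter fun j => ?_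
  have : Measurable fun g : Mat q => g i j :=
    (measurable_pi_apply j).comp (measurable_pi_apply i)
  exact this measurableSet_Ioi

lemma measurable_Xprod {Ω : Type} [MeasurableSpace Ω] {X : ℕ → Ω → Mat q}
    (hX : ∀ n, Measurable (X n)) (n : ℕ) : Measurable fun ω => Xprod X n ω := by
  induction n with
  | zero => exact measurable_const
  | succ n ih =>
    have : (fun ω => Xprod X (n + 1) ω) =
        (fun p : Mat q × Mat q => p.1 * p.2) ∘ fun ω => (X (n + 1) ω, Xprod X n ω) := rfl
    rw [this]
    exact measurable_matmul.comp ((hX (n + 1)).prodMk ih)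

/-- The law of the random vector `(X_{a+1}, …, X_{a+m})` is the `m`-fold product of the
common law `ν` of the `X_n`. -/
lemma block_law {Ω : Type} [MeasurableSpace Ω] {P : Measure Ω} [IsProbabilityMeasure P]
    {X : ℕ → Ω → Mat q} (hiid : IID P X) (m a : ℕ) :
    Measure.pi (fun _ : Fin m => Measure.map (X 1) P) =
      Measure.map (fun ω (i : Fin m) => X (a + 1 + (i : ℕ)) ω) P := by
  have hX := hiid.1
  haveI : IsProbabilityMeasure (Measure.map (X 1) P) :=
    Measure.isProbabilityMeasure_map (hX 1).aemeasurable
  have hV : Measurable fun ω (i : Fin m) => X (a + 1 + (i : ℕ)) ω :=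
    measurable_pi_lambda _ fun i => hX _
  refine Measure.pi_eq fun s hs => ?_
  rw [Measure.map_apply hV (MeasurableSet.univ_pi hs)]
  classical
  set sets : ℕ → Set (Mat q) :=
    fun n => if h : n - (a + 1) < m ∧ a + 1 ≤ n then s ⟨n - (a + 1), h.1⟩ else Set.univ
    with hsets
  have hsets_spec : ∀ i : Fin m, sets (a + 1 + (i : ℕ)) = s i := by
    intro i
    have h : a + 1 + (i : ℕ) - (a + 1) < m ∧ a + 1 ≤ a + 1 + (i : ℕ) :=
      ⟨by omega, by omega⟩
    rw [hsets]
    simp only [dif_pos h]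
    have hv : (⟨a + 1 + (i : ℕ) - (a + 1), h.1⟩ : Fin m) = i := by
      apply Fin.ext
      show a + 1 + (i : ℕ) - (a + 1) = (i : ℕ)
      omega
    rw [hv]
  set SF : Finset ℕ := Finset.image (fun i : Fin m => a + 1 + (i : ℕ)) Finset.univ with hSF
  have hinj : Function.Injective (fun i : Fin m => a + 1 + (i : ℕ)) := by
    intro x y h
    simp only [add_right_inj] at h
    exact Fin.ext h
  have hpre : (fun ω (i : Fin m) => X (a + 1 + (i : ℕ)) ω) ⁻¹' Set.pi Set.univ s =
      ⋂ n ∈ SF, X n ⁻¹' sets n := by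
    ext ω
    simp only [Set.mem_preimage, Set.mem_pi, Set.mem_univ, forall_true_left, Set.mem_iInter,
      hSF, Finset.mem_image, Finset.mem_univ, true_and]
    constructor
    · rintro h n ⟨i, rfl⟩
      rw [hsets_spec i]; exact h i
    · intro h i
      rw [← hsets_spec i]; exact h _ ⟨i, rfl⟩
  rw [hpre]
  rw [hiid.2.1.measure_inter_preimage_eq_mul SF (sets := sets) (fun n _ => by
    rw [hsets]
    dsimp only
    split_ifs with h
    · exact hs _
    · exact MeasurableSet.univ)]
  rw [hSF, Finset.prod_image (fun x _ y _ h => hinj h)]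
  refine Finset.prod_congr rfl fun i _ => ?_
  rw [hsets_spec i, ← Measure.map_apply (hX _) (hs i), hiid.2.2 (a + 1 + (i : ℕ)),
    ← hiid.2.2 1]

/-- Probability of the event that a block of length `m` starting after time `a`
has a product in `S°` does not depend on `a`. -/
lemma block_prob {Ω : Type} [MeasurableSpace Ω] {P : Measure Ω} [IsProbabilityMeasure P]
    {X : ℕ → Ω → Mat q} (hiid : IID P X) (m a : ℕ) :
    P {ω | memS0 (mprod (fun j => X (j + a) ω) m)} =
      P {ω | memS0 (mprod (fun j => X (j + 0) ω) m)} := by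
  classical
  have hX := hiid.1
  set Mset : Set ((Fin m) → Mat q) :=
    {v | memS0 (mprod (fun k => if h : 1 ≤ k ∧ k ≤ m then v ⟨k - 1, by omega⟩ else 1) m)}
    with hMset
  have hMmeas : MeasurableSet Mset := by
    have hmeas : Measurable fun v : (Fin m) → Mat q =>
        mprod (fun k => if h : 1 ≤ k ∧ k ≤ m then v ⟨k - 1, by omega⟩ else 1) m := by
      have : (fun v : (Fin m) → Mat q =>
          mprod (fun k => if h : 1 ≤ k ∧ k ≤ m then v ⟨k - 1, by omega⟩ else 1) m) =
          (fun Y : ℕ → Mat q => mprod Y m) ∘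
          (fun v k => if h : 1 ≤ k ∧ k ≤ m then v ⟨k - 1, by omega⟩ else 1) := rfl
      rw [this]
      refine (measurable_mprod m).comp (measurable_pi_lambda _ fun k => ?_)
      by_cases h : 1 ≤ k ∧ k ≤ m
      · simp only [dif_pos h]; exact measurable_pi_apply _
      · simp only [dif_neg h]; exact measurable_const
    exact hmeas measurableSet_S0
  have key : ∀ b : ℕ, {ω | memS0 (mprod (fun j => X (j + b) ω) m)} =
      (fun ω (i : Fin m) => X (b + 1 + (i : ℕ)) ω) ⁻¹' Mset := by
    intro b
    ext ω
    simp only [Set.mem_setOf_eq, Set.mem_preimage, hMset]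
    have : mprod (fun j => X (j + b) ω) m =
        mprod (fun k => if h : 1 ≤ k ∧ k ≤ m then
          (fun i : Fin m => X (b + 1 + (i : ℕ)) ω) ⟨k - 1, by omega⟩ else 1) m := by
      refine mprod_congr fun k hk hk' => ?_
      simp only [dif_pos (And.intro hk hk')]
      show X (k + b) ω = X (b + 1 + (k - 1)) ω
      have hkb : b + 1 + (k - 1) = k + b := by omega
      rw [hkb]
    rw [this]
  have hVb : ∀ b : ℕ, Measurable fun ω (i : Fin m) => X (b + 1 + (i : ℕ)) ω :=
    fun b => measurable_pi_lambda _ fun i => hX _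
  rw [key a, key 0, ← Measure.map_apply (hVb a) hMmeas, ← Measure.map_apply (hVb 0) hMmeas,
    ← block_law hiid m a, ← block_law hiid m 0]

/-- Extension of a vector indexed by a finset to the full index set. -/
def extFn {S : Finset ℕ} (v : {x // x ∈ S} → Mat q) (n : ℕ) : Mat q :=
  if h : n ∈ S then v ⟨n, h⟩ else 1

lemma measurable_extFn {S : Finset ℕ} (n : ℕ) :
    Measurable fun v : {x // x ∈ S} → Mat q => extFn v n := by
  unfold extFn
  by_cases h : n ∈ S
  · simp only [dif_pos h]; exact measurable_pi_apply _
  · simp only [dif_neg h]; exact measurable_const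

/-- The key zero–one law: if condition (C) holds then a.s. some `X^{(n)}` lies in `S°`. -/
lemma main_lemma {q : ℕ} {Ω : Type} [MeasurableSpace Ω]
    (P : Measure Ω) [IsProbabilityMeasure P] (X : ℕ → Ω → Mat q)
    (hS : ∀ n, 1 ≤ n → ∀ ω, memS (X n ω)) (hiid : IID P X) (hC : CondC P X) :
    P {ω | ∃ n, 1 ≤ n ∧ memS0 (Xprod X n ω)} = 1 := by
  classical
  have hX := hiid.1
  set A : Set Ω := {ω | ∃ n, 1 ≤ n ∧ memS0 (Xprod X n ω)} with hA
  have hEn : ∀ n : ℕ, MeasurableSet {ω | memS0 (Xprod X n ω)} :=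
    fun n => (measurable_Xprod hX n) measurableSet_S0
  have hAmeas : MeasurableSet A := by
    have : A = ⋃ n, ⋃ (_ : 1 ≤ n), {ω | memS0 (Xprod X n ω)} := by
      ext ω; simp [hA]
    rw [this]
    exact MeasurableSet.iUnion fun n => MeasurableSet.iUnion fun _ => hEn n
  -- choose m with positive probability
  have hsub : A ⊆ ⋃ n, ⋃ (_ : 1 ≤ n), {ω | memS0 (Xprod X n ω)} := by
    intro ω hω; obtain ⟨n, hn, h0⟩ := hω; exact Set.mem_iUnion.2 ⟨n, Set.mem_iUnion.2 ⟨hn, h0⟩⟩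
  have hexm : ∃ m, 1 ≤ m ∧ P {ω | memS0 (Xprod X m ω)} ≠ 0 := by
    by_contra hcon
    push_neg at hcon
    have : P A = 0 := by
      refine measure_mono_null hsub (le_antisymm ?_ (by simp))
      calc P (⋃ n, ⋃ (_ : 1 ≤ n), {ω | memS0 (Xprod X n ω)})
          ≤ ∑' n, P (⋃ (_ : 1 ≤ n), {ω | memS0 (Xprod X n ω)}) := measure_iUnion_le _
        _ = 0 := by
            refine ENNReal.tsum_eq_zero.2 fun n => ?_
            by_cases hn : 1 ≤ n
            · simp only [Set.iUnion_eq_if, if_pos hn]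
              exact hcon n hn
            · simp [Set.iUnion_eq_if, if_neg hn]
    exact absurd this (by simpa [CondC, ← hA] using hC.ne')
  obtain ⟨m, hm1, hpm⟩ := hexm
  set p : ENNReal := P {ω | memS0 (Xprod X m ω)} with hp
  -- block events
  set F : ℕ → Set Ω := fun k => {ω | memS0 (mprod (fun j => X (j + k * m) ω) m)} with hF
  have hFprob : ∀ k, P (F k) = p := by
    intro k
    rw [hF, hp]
    simp only
    rw [block_prob hiid m (k * m)]
    congr 1
    ext ω
    simp only [Set.mem_setOf_eq]
    have : Xprod X m ω = mprod (fun j => X (j + 0) ω) m := by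
      have := Xprod_add X 0 m ω
      simpa [Xprod] using this
    rw [this]
  have hFsub : ∀ k, F k ⊆ A := by
    intro k ω hω
    refine ⟨k * m + m, by omega, ?_⟩
    have := Xprod_add X (k * m) m ω
    rw [this]
    exact memS0_mul_memS hω (memS_Xprod hS (k * m) ω)
  -- measurability of F k
  have hFmeas : ∀ k, MeasurableSet (F k) := by
    intro k
    have hmeas : Measurable fun ω => mprod (fun j => X (j + k * m) ω) m := by
      have : (fun ω => mprod (fun j => X (j + k * m) ω) m) =
          (fun Y : ℕ → Mat q => mprod Y m) ∘ (fun ω j => X (j + k * m) ω) := rfl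
      rw [this]
      exact (measurable_mprod m).comp (measurable_pi_lambda _ fun j => hX _)
    exact hmeas measurableSet_S0
  -- independence: P (⋂_{k<K} (F k)ᶜ) = (1-p)^K
  have hPC : ∀ K : ℕ, P (⋂ k ∈ Finset.range K, (F k)ᶜ) = (1 - p) ^ K := by
    intro K
    induction K with
    | zero => simp
    | succ K ih =>
      have hsplit : (⋂ k ∈ Finset.range (K + 1), (F k)ᶜ) =
          (⋂ k ∈ Finset.range K, (F k)ᶜ) ∩ (F K)ᶜ := by
        ext ω
        simp only [Set.mem_iInter, Finset.mem_range, Set.mem_inter_iff]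
        constructor
        · intro h
          exact ⟨fun k hk => h k (by omega), h K (by omega)⟩
        · rintro ⟨h1, h2⟩ k hk
          rcases Nat.lt_succ_iff_lt_or_eq.1 hk with hk' | rfl
          · exact h1 k hk'
          · exact h2
      rw [hsplit]
      -- independence via disjoint index finsets
      set S : Finset ℕ := Finset.Icc 1 (K * m) with hSdef
      set T : Finset ℕ := Finset.Icc (K * m + 1) (K * m + m) with hTdef
      have hST : Disjoint S T := by
        rw [Finset.disjoint_left]
        intro n hnS hnT
        rw [hSdef, Finset.mem_Icc] at hnS
        rw [hTdef, Finset.mem_Icc] at hnT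
        omega
      have hIndep := hiid.2.1.indepFun_finset S T hST hX
      set US : Ω → ({x // x ∈ S} → Mat q) := fun ω i => X (i : ℕ) ω with hUS
      set UT : Ω → ({x // x ∈ T} → Mat q) := fun ω i => X (i : ℕ) ω with hUT
      have hUSm : Measurable US := measurable_pi_lambda _ fun i => hX _
      have hUTm : Measurable UT := measurable_pi_lambda _ fun i => hX _
      set AS : Set ({x // x ∈ S} → Mat q) :=
        {v | ∀ k < K, ¬ memS0 (mprod (fun j => extFn v (j + k * m)) m)} with hAS
      set AT : Set ({x // x ∈ T} → Mat q) :=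
        {v | memS0 (mprod (fun j => extFn v (j + K * m)) m)} with hAT
      have hASmeas : MeasurableSet AS := by
        have : AS = ⋂ k, ⋂ (_ : k < K),
            ((fun v => mprod (fun j => extFn v (j + k * m)) m) ⁻¹' {g | memS0 g})ᶜ := by
          ext v; simp [hAS]
        rw [this]
        refine MeasurableSet.iInter fun k => MeasurableSet.iInter fun _ => ?_
        have hm : Measurable fun v : {x // x ∈ S} → Mat q =>
            mprod (fun j => extFn v (j + k * m)) m := by
          have : (fun v : {x // x ∈ S} → Mat q => mprod (fun j => extFn v (j + k * m)) m) =
              (fun Y : ℕ → Mat q => mprod Y m) ∘ (fun v j => extFn v (j + k * m)) := rfl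
          rw [this]
          exact (measurable_mprod m).comp (measurable_pi_lambda _ fun j => measurable_extFn _)
        exact (hm measurableSet_S0).compl
      have hATmeas : MeasurableSet AT := by
        have hm : Measurable fun v : {x // x ∈ T} → Mat q =>
            mprod (fun j => extFn v (j + K * m)) m := by
          have : (fun v : {x // x ∈ T} → Mat q => mprod (fun j => extFn v (j + K * m)) m) =
              (fun Y : ℕ → Mat q => mprod Y m) ∘ (fun v j => extFn v (j + K * m)) := rfl
          rw [this]
          exact (measurable_mprod m).comp (measurable_pi_lambda _ fun j => measurable_extFn _)
        exact hm measurableSet_S0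
      have hCeq : (⋂ k ∈ Finset.range K, (F k)ᶜ) = US ⁻¹' AS := by
        ext ω
        simp only [Set.mem_iInter, Finset.mem_range, Set.mem_preimage, hAS,
          Set.mem_setOf_eq, Set.mem_compl_iff, hF]
        have hmp : ∀ k, k < K → mprod (fun j => X (j + k * m) ω) m =
            mprod (fun j => extFn (US ω) (j + k * m)) m := by
          intro k hk
          refine mprod_congr fun j hj hj' => ?_
          have hmem : j + k * m ∈ S := by
            rw [hSdef, Finset.mem_Icc]
            constructor
            · omega
            · calc j + k * m ≤ m + k * m := by omega
                _ = (k + 1) * m := by ring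
                _ ≤ K * m := Nat.mul_le_mul_right m (by omega)
          rw [extFn, dif_pos hmem]
        constructor
        · intro h k hk; rw [← hmp k hk]; exact h k hk
        · intro h k hk; rw [hmp k hk]; exact h k hk
      have hFeq : F K = UT ⁻¹' AT := by
        ext ω
        simp only [Set.mem_preimage, hAT, Set.mem_setOf_eq, hF]
        have hmp : mprod (fun j => X (j + K * m) ω) m =
            mprod (fun j => extFn (UT ω) (j + K * m)) m := by
          refine mprod_congr fun j hj hj' => ?_
          have hmem : j + K * m ∈ T := by
            rw [hTdef, Finset.mem_Icc]; omega
          rw [extFn, dif_pos hmem]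
        rw [hmp]
      have hmul := hIndep.measure_inter_preimage_eq_mul AS ATᶜ hASmeas hATmeas.compl
      have : P ((⋂ k ∈ Finset.range K, (F k)ᶜ) ∩ (F K)ᶜ) =
          P (⋂ k ∈ Finset.range K, (F k)ᶜ) * P ((F K)ᶜ) := by
        rw [hCeq, hFeq, ← Set.preimage_compl, hmul]
      rw [this, ih]
      have hFc : P ((F K)ᶜ) = 1 - p := by
        rw [measure_compl (hFmeas K) (measure_ne_top P _), hFprob K, measure_univ]
      rw [hFc, pow_succ]
  -- conclude
  have hAc : ∀ K : ℕ, P Aᶜ ≤ (1 - p) ^ K := by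
    intro K
    rw [← hPC K]
    refine measure_mono fun ω hω => ?_
    simp only [Set.mem_iInter, Finset.mem_range, Set.mem_compl_iff]
    intro k _
    exact fun hFk => hω (hFsub k hFk)
  have hlt : (1 - p) < 1 := by
    refine ENNReal.sub_lt_self ENNReal.one_ne_top one_ne_zero hpm
  have htend : Tendsto (fun K : ℕ => (1 - p) ^ K) atTop (𝓝 0) :=
    ENNReal.tendsto_pow_atTop_nhds_zero_of_lt_one hlt
  have hzero : P Aᶜ = 0 :=
    le_antisymm (ge_of_tendsto htend (Filter.Eventually.of_forall hAc)) (by simp)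
  have := measure_add_measure_compl hAmeas (μ := P)
  rw [hzero, add_zero, measure_univ] at this
  exact this

end Aux

/-- **Lemma II.1 (first part).** Condition (C), `P[T < ∞] = 1` and
`P(⋃_{n≥1} [X^{(n)} ∈ S°]) = 1` are equivalent. -/
theorem statement1 {q : ℕ} (hq : 1 ≤ q) {Ω : Type} [MeasurableSpace Ω]
    (P : Measure Ω) [IsProbabilityMeasure P] (X : ℕ → Ω → Mat q)
    (hS : ∀ n, 1 ≤ n → ∀ ω, memS (X n ω)) (hiid : IID P X) :
    (CondC P X ↔ P {ω | hitT X ω < ⊤} = 1) ∧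
    (CondC P X ↔ P {ω | ∃ n, 1 ≤ n ∧ memS0 (Xprod X n ω)} = 1) := by
  have hsets : {ω | hitT X ω < ⊤} = {ω | ∃ n, 1 ≤ n ∧ memS0 (Xprod X n ω)} := by
    ext ω
    simp only [Set.mem_setOf_eq]
    constructor
    · intro h
      by_contra hc
      push_neg at hc
      have : hitT X ω = ⊤ := by
        rw [hitT]
        refine iInf_eq_top.2 fun n => iInf_eq_top.2 fun hn => ?_
        exact absurd hn.2 (hc n hn.1)
      rw [this] at h
      exact lt_irrefl _ h
    · rintro ⟨n, hn⟩
      refine lt_of_le_of_lt ?_ (ENat.coe_lt_top n)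
      exact iInf_le_of_le n (iInf_le_of_le hn le_rfl)
  have hmain : CondC P X ↔ P {ω | ∃ n, 1 ≤ n ∧ memS0 (Xprod X n ω)} = 1 := by
    constructor
    · intro hC
      exact main_lemma P X hS hiid hC
    · intro h
      rw [CondC, h]
      exact one_pos
  exact ⟨by rw [hsets]; exact hmain, hmain⟩

end StablePaper
end
end

section
/- For every g ∈ S and all z, x, y ∈ B̄ with d(x,y) < 1, one has |ξ(g,z)| ≤ ℓ(g) and |ξ(g,x) − ξ(g,y)| ≤ 2 ln(1/(1 − d(x,y))). In particular, for g ∈ S and x, y ∈ B̄, m(x,y)·‖gy‖ ≤ ‖gx‖. -/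
open MeasureTheory ProbabilityTheory Filter Topology Matrix Finset

noncomputable section

namespace StablePaper

variable {q : ℕ}

lemma sum_eq_one {x : Fin q → ℝ} (hx : inBbar x) : ∑ j, x j = 1 := by
  rw [← hx.2]; unfold nrm
  exact Finset.sum_congr rfl fun j _ => (abs_of_nonneg (hx.1 j)).symm

lemma exists_pos {x : Fin q → ℝ} (hx : inBbar x) : ∃ j, 0 < x j := by
  by_contra h
  push_neg at h
  have : ∑ j, x j = 0 := Finset.sum_eq_zero fun j _ => le_antisymm (h j) (hx.1 j)
  rw [sum_eq_one hx] at this; norm_num at this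

lemma nrm_mulVec (g : Mat q) (hg : ∀ i j, 0 ≤ g i j) {x : Fin q → ℝ} (hx : inCbar x) :
    nrm (g.mulVec x) = ∑ j, (∑ i, g i j) * x j := by
  have h1 : ∀ i, |g.mulVec x i| = ∑ j, g i j * x j := by
    intro i
    have he : g.mulVec x i = ∑ j, g i j * x j := rfl
    rw [he, abs_of_nonneg (Finset.sum_nonneg fun j _ => mul_nonneg (hg i j) (hx j))]
  simp only [nrm, h1]
  rw [Finset.sum_comm]
  simp [Finset.sum_mul]

lemma mfun_nonneg {x y : Fin q → ℝ} (hx : inBbar x) (hy : inBbar y) : 0 ≤ mfun x y := by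
  obtain ⟨j, hj⟩ := exists_pos hy
  have hne : ((fun i => x i / y i) '' {i | 0 < y i}).Nonempty := ⟨_, ⟨j, hj, rfl⟩⟩
  have hfin : ((fun i => x i / y i) '' {i | 0 < y i}).Finite := (Set.toFinite _).image _
  obtain ⟨i, hi, heq⟩ := hne.csInf_mem hfin
  rw [mfun, ← heq]
  exact div_nonneg (hx.1 i) (le_of_lt hi)

lemma mfun_mul_le {x y : Fin q → ℝ} (hx : inBbar x) (hy : inBbar y) (i : Fin q) :
    mfun x y * y i ≤ x i := by
  rcases lt_or_eq_of_le (hy.1 i) with hi | hi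
  · have hbdd : BddBelow ((fun i => x i / y i) '' {i | 0 < y i}) :=
      ((Set.toFinite _).image _).bddBelow
    have := csInf_le hbdd ⟨i, hi, rfl⟩
    rw [mfun]
    exact (le_div_iff₀ hi).mp this
  · rw [← hi, mul_zero]; exact hx.1 i

lemma mfun_le_one {x y : Fin q → ℝ} (hx : inBbar x) (hy : inBbar y) : mfun x y ≤ 1 := by
  have := Finset.sum_le_sum (fun i (_ : i ∈ Finset.univ) => mfun_mul_le hx hy i)
  rw [← Finset.mul_sum, sum_eq_one hx, sum_eq_one hy, mul_one] at this
  exact this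

lemma key_ineq (g : Mat q) (hg : memS g) {x y : Fin q → ℝ} (hx : inBbar x) (hy : inBbar y) :
    mfun x y * nrm (g.mulVec y) ≤ nrm (g.mulVec x) := by
  rw [nrm_mulVec g hg.1 hx.1, nrm_mulVec g hg.1 hy.1, Finset.mul_sum]
  refine Finset.sum_le_sum fun j _ => ?_
  have h1 : 0 ≤ ∑ i, g i j := Finset.sum_nonneg fun i _ => hg.1 i j
  calc mfun x y * ((∑ i, g i j) * y j) = (∑ i, g i j) * (mfun x y * y j) := by ring
  _ ≤ (∑ i, g i j) * x j := mul_le_mul_of_nonneg_left (mfun_mul_le hx hy j) h1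

lemma nrm_mulVec_pos (g : Mat q) (hg : memS g) {x : Fin q → ℝ} (hx : inBbar x) :
    0 < nrm (g.mulVec x) := by
  rw [nrm_mulVec g hg.1 hx.1]
  obtain ⟨j, hj⟩ := exists_pos hx
  refine Finset.sum_pos' (fun k _ => mul_nonneg (Finset.sum_nonneg fun i _ => hg.1 i k) (hx.1 k)) ⟨j, Finset.mem_univ j, ?_⟩
  obtain ⟨i, hi⟩ := hg.2.2 j
  exact mul_pos (Finset.sum_pos' (fun i _ => hg.1 i j) ⟨i, Finset.mem_univ i, hi⟩) hj

/-- **Lemma III.1.** For `g ∈ S` and `z, x, y ∈ B̄` with `d(x,y) < 1`: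
`|ξ(g,z)| ≤ ℓ(g)` and `|ξ(g,x) − ξ(g,y)| ≤ 2 ln(1/(1 − d(x,y)))`; moreover
`m(x,y)·‖gy‖ ≤ ‖gx‖` for all `x, y ∈ B̄`. -/
theorem statement13 {q : ℕ} (hq : 1 ≤ q) (g : Mat q) (hg : memS g) :
    (∀ z x y : Fin q → ℝ, inBbar z → inBbar x → inBbar y → dB x y < 1 →
      |xi g z| ≤ ellg g ∧
      |xi g x - xi g y| ≤ 2 * Real.log (1 / (1 - dB x y))) ∧
    (∀ x y : Fin q → ℝ, inBbar x → inBbar y →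
      mfun x y * nrm (g.mulVec y) ≤ nrm (g.mulVec x)) := by
  haveI : Nonempty (Fin q) := Fin.pos_iff_nonempty.mp hq
  set c1 : ℝ := Finset.univ.inf' Finset.univ_nonempty (fun j => ∑ i, g i j) with hc1
  have hc1pos : 0 < c1 := by
    rw [hc1, Finset.lt_inf'_iff]
    intro j _
    obtain ⟨i, hi⟩ := hg.2.2 j
    exact Finset.sum_pos' (fun i _ => hg.1 i j) ⟨i, Finset.mem_univ i, hi⟩
  set c2 : ℝ := Finset.univ.sup' Finset.univ_nonempty (fun j => ∑ i, g i j) with hc2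
  have hlow : ∀ x : Fin q → ℝ, inBbar x → c1 ≤ nrm (g.mulVec x) := by
    intro x hx
    rw [nrm_mulVec g hg.1 hx.1]
    calc c1 = c1 * ∑ j, x j := by rw [sum_eq_one hx, mul_one]
    _ = ∑ j, c1 * x j := by rw [Finset.mul_sum]
    _ ≤ ∑ j, (∑ i, g i j) * x j := Finset.sum_le_sum fun j _ =>
        mul_le_mul_of_nonneg_right (Finset.inf'_le _ (Finset.mem_univ j)) (hx.1 j)
  have hhigh : ∀ x : Fin q → ℝ, inBbar x → nrm (g.mulVec x) ≤ c2 := by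
    intro x hx
    rw [nrm_mulVec g hg.1 hx.1]
    calc ∑ j, (∑ i, g i j) * x j ≤ ∑ j, c2 * x j := Finset.sum_le_sum fun j _ =>
        mul_le_mul_of_nonneg_right (Finset.le_sup' (fun j => ∑ i, g i j) (Finset.mem_univ j)) (hx.1 j)
    _ = c2 * ∑ j, x j := by rw [Finset.mul_sum]
    _ = c2 := by rw [sum_eq_one hx, mul_one]
  set Sg := {r : ℝ | ∃ x, inBbar x ∧ r = nrm (g.mulVec x)} with hSg
  have hbdd_below : BddBelow Sg := ⟨c1, fun r ⟨x, hx, hr⟩ => hr ▸ hlow x hx⟩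
  have hbdd_above : BddAbove Sg := ⟨c2, fun r ⟨x, hx, hr⟩ => hr ▸ hhigh x hx⟩
  constructor
  · intro z x y hz hx hy hd
    constructor
    · -- |xi g z| ≤ ellg g
      have hmem : nrm (g.mulVec z) ∈ Sg := ⟨z, hz, rfl⟩
      have hne : Sg.Nonempty := ⟨_, hmem⟩
      have hv1 : vg g ≤ nrm (g.mulVec z) := csInf_le hbdd_below hmem
      have hv2 : c1 ≤ vg g := le_csInf hne (fun r ⟨x, hx, hr⟩ => hr ▸ hlow x hx)
      have ho1 : nrm (g.mulVec z) ≤ opg g := le_csSup hbdd_above hmem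
      have hvpos : 0 < vg g := lt_of_lt_of_le hc1pos hv2
      have hopos : 0 < opg g := lt_of_lt_of_le (nrm_mulVec_pos g hg hz) ho1
      have l1 : Real.log (vg g) ≤ xi g z := Real.log_le_log hvpos hv1
      have l2 : xi g z ≤ Real.log (opg g) := Real.log_le_log (nrm_mulVec_pos g hg hz) ho1
      rw [ellg, abs_le]
      constructor
      · nlinarith [abs_nonneg (Real.log (opg g)), neg_abs_le (Real.log (vg g))]
      · nlinarith [abs_nonneg (Real.log (vg g)), le_abs_self (Real.log (opg g))]
    · -- second bound
      set m1 := mfun x y with hm1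
      set m2 := mfun y x with hm2
      set s := m1 * m2 with hs
      have hm1n : 0 ≤ m1 := mfun_nonneg hx hy
      have hm2n : 0 ≤ m2 := mfun_nonneg hy hx
      have hm11 : m1 ≤ 1 := mfun_le_one hx hy
      have hm21 : m2 ≤ 1 := mfun_le_one hy hx
      have hsn : 0 ≤ s := mul_nonneg hm1n hm2n
      have hs1 : s ≤ 1 := by nlinarith
      have hspos : 0 < s := by
        rw [dB] at hd
        by_contra h
        push_neg at h
        have hs0 : s = 0 := le_antisymm h hsn
        rw [← hs, hs0] at hd
        norm_num at hd
      have hm1pos : 0 < m1 := by nlinarith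
      have hm2pos : 0 < m2 := by nlinarith
      have ha : 0 < nrm (g.mulVec x) := nrm_mulVec_pos g hg hx
      have hb : 0 < nrm (g.mulVec y) := nrm_mulVec_pos g hg hy
      have h1 : m1 * nrm (g.mulVec y) ≤ nrm (g.mulVec x) := key_ineq g hg hx hy
      have h2 : m2 * nrm (g.mulVec x) ≤ nrm (g.mulVec y) := key_ineq g hg hy hx
      have lm1 : Real.log m1 ≤ 0 := Real.log_nonpos hm1n hm11
      have lm2 : Real.log m2 ≤ 0 := Real.log_nonpos hm2n hm21
      have e1 : Real.log m1 + Real.log (nrm (g.mulVec y)) ≤ Real.log (nrm (g.mulVec x)) := by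
        rw [← Real.log_mul (ne_of_gt hm1pos) (ne_of_gt hb)]
        exact Real.log_le_log (mul_pos hm1pos hb) h1
      have e2 : Real.log m2 + Real.log (nrm (g.mulVec x)) ≤ Real.log (nrm (g.mulVec y)) := by
        rw [← Real.log_mul (ne_of_gt hm2pos) (ne_of_gt ha)]
        exact Real.log_le_log (mul_pos hm2pos ha) h2
      have hls : Real.log s = Real.log m1 + Real.log m2 :=
        Real.log_mul (ne_of_gt hm1pos) (ne_of_gt hm2pos)
      have hxi : |xi g x - xi g y| ≤ -Real.log s := by
        rw [abs_le, xi, xi]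
        constructor <;> nlinarith
      refine hxi.trans ?_
      -- -log s ≤ 2 log (1/(1 - dB x y))
      have hdb : 1 - dB x y = 2 * s / (1 + s) := by
        rw [dB, ← hm1, ← hm2, ← hs]
        field_simp
        ring
      have hinv : 1 / (2 * s / (1 + s)) = (1 + s) / (2 * s) := by
        rw [one_div, inv_div]
      rw [hdb, hinv, ← Real.log_inv]
      have hgoal : s⁻¹ ≤ ((1 + s) / (2 * s)) ^ 2 := by
        rw [div_pow, le_div_iff₀ (by positivity)]
        have h4 : s⁻¹ * (2 * s) ^ 2 = 4 * s := by field_simp; ring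
        rw [h4]; nlinarith [sq_nonneg (1 - s)]
      calc Real.log s⁻¹ ≤ Real.log (((1 + s) / (2 * s)) ^ 2) :=
            Real.log_le_log (by positivity) hgoal
      _ = 2 * Real.log ((1 + s) / (2 * s)) := by
            rw [Real.log_pow]; push_cast; ring
  · intro x y hx hy
    exact key_ineq g hg hx hy

end StablePaper
end
end
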